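/- Let B ∈ ℝ^{n×n} be symmetric, with spectral decomposition B = V·diag(σ_1,…,σ_n)·Vᵀ where V is orthogonal. Define B₊ = V·diag(max(σ_1,0),…,max(σ_n,0))·Vᵀ. Then B₊ is positive semidefinite, and for every positive semidefinite matrix X ∈ ℝ^{n×n} one has ‖B − X‖²_F ≥ Σ_{i : σ_i < 0} σ_i², with equality if and only if X = B₊. In particular B₊ is the (unique) nearest positive semidefinite matrix to B in the Frobenius norm and the minimal squared distance is Σ_{i : σ_i < 0} σ_i². -/

import Mathlib

open Matrix

/-- Squared Frobenius norm of a real matrix. -/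
noncomputable def frobSq {n : ℕ} (M : Matrix (Fin n) (Fin n) ℝ) : ℝ :=
  ∑ a, ∑ b, (M a b) ^ 2

lemma frobSq_eq_trace {n : ℕ} (M : Matrix (Fin n) (Fin n) ℝ) :
    frobSq M = (Mᵀ * M).trace := by
  simp only [frobSq, Matrix.trace, Matrix.diag, Matrix.mul_apply, Matrix.transpose_apply, sq]
  exact Finset.sum_comm ..

lemma frobSq_conj {n : ℕ} (V M : Matrix (Fin n) (Fin n) ℝ)
    (hV : Vᵀ * V = 1) : frobSq (V * M * Vᵀ) = frobSq M := by
  have h2 : ∀ A : Matrix (Fin n) (Fin n) ℝ, Vᵀ * (V * A) = A := fun A => by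
    rw [← Matrix.mul_assoc, hV, Matrix.one_mul]
  have key : (V * M * Vᵀ)ᵀ * (V * M * Vᵀ) = V * (Mᵀ * M) * Vᵀ := by
    simp only [Matrix.transpose_mul, Matrix.transpose_transpose, Matrix.mul_assoc, h2]
  rw [frobSq_eq_trace, frobSq_eq_trace, key, Matrix.trace_mul_comm, ← Matrix.mul_assoc, hV,
    Matrix.one_mul]

open scoped Classical in
lemma core_nearest_psd {n : ℕ} (σ : Fin n → ℝ) (Y : Matrix (Fin n) (Fin n) ℝ)
    (hY : Y.PosSemidef) :
    (∑ i, if σ i < 0 then (σ i) ^ 2 else 0) ≤ frobSq (Matrix.diagonal σ - Y) ∧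
    (frobSq (Matrix.diagonal σ - Y) = (∑ i, if σ i < 0 then (σ i) ^ 2 else 0) ↔
      Y = Matrix.diagonal (fun i => max (σ i) 0)) := by
  have hdiag : ∀ i, 0 ≤ Y i i := fun i => by
    have := hY.2 (Finsupp.single i 1); simpa using this
  have hfr : frobSq (Matrix.diagonal σ - Y)
      = ∑ a, ∑ b, ((if a = b then σ a else 0) - Y a b) ^ 2 := by
    unfold frobSq
    refine Finset.sum_congr rfl fun a _ => Finset.sum_congr rfl fun b _ => ?_
    simp [Matrix.sub_apply, Matrix.diagonal_apply]
  have hlb : (∑ i, if σ i < 0 then (σ i) ^ 2 else 0)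
      = ∑ a, ∑ b, (if a = b then (if σ a < 0 then (σ a) ^ 2 else 0) else 0) := by
    refine Finset.sum_congr rfl fun a _ => ?_
    simp
  have hterm : ∀ a b : Fin n, (if a = b then (if σ a < 0 then (σ a) ^ 2 else 0) else 0)
      ≤ ((if a = b then σ a else 0) - Y a b) ^ 2 := by
    intro a b
    by_cases hab : a = b
    · subst hab
      simp only [if_pos rfl, eq_self_iff_true, if_true]
      by_cases hs : σ a < 0
      · simp only [if_pos hs]
        nlinarith [hdiag a, sq_nonneg (Y a a)]
      · simp only [if_neg hs]; positivity
    · simp only [if_neg hab]; positivity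
  have hle : (∑ i, if σ i < 0 then (σ i) ^ 2 else 0) ≤ frobSq (Matrix.diagonal σ - Y) := by
    rw [hfr, hlb]
    exact Finset.sum_le_sum fun a _ => Finset.sum_le_sum fun b _ => hterm a b
  refine ⟨hle, ?_, ?_⟩
  · intro heq
    rw [hfr, hlb] at heq
    have h1 := (Finset.sum_eq_sum_iff_of_le (fun a _ =>
      Finset.sum_le_sum fun b _ => hterm a b)).mp heq.symm
    have hall : ∀ a b : Fin n,
        (if a = b then (if σ a < 0 then (σ a) ^ 2 else 0) else 0)
          = ((if a = b then σ a else 0) - Y a b) ^ 2 := fun a b =>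
      (Finset.sum_eq_sum_iff_of_le (fun b _ => hterm a b)).mp
        (h1 a (Finset.mem_univ a)) b (Finset.mem_univ b)
    ext a b
    by_cases hab : a = b
    · subst hab
      have h := (hall a a).symm
      simp only [eq_self_iff_true, if_true] at h
      by_cases hs : σ a < 0
      · rw [if_pos hs] at h
        have h0 : Y a a * (Y a a - 2 * σ a) = 0 := by nlinarith [h]
        have h2 : Y a a - 2 * σ a > 0 := by linarith [hdiag a]
        have hY0 : Y a a = 0 := by
          rcases mul_eq_zero.mp h0 with h' | h'
          · exact h'
          · linarith
        simp [Matrix.diagonal_apply, hY0, max_eq_right (le_of_lt hs)]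
      · rw [if_neg hs] at h
        have h3 : σ a - Y a a = 0 := sq_eq_zero_iff.mp h
        simp only [Matrix.diagonal_apply_eq, max_eq_left (not_lt.mp hs)]
        linarith
    · have h := (hall a b).symm
      simp only [if_neg hab] at h
      have h3 : (0 : ℝ) - Y a b = 0 := sq_eq_zero_iff.mp h
      rw [Matrix.diagonal_apply_ne _ hab]
      linarith
  · intro hYd
    subst hYd
    rw [hfr, hlb]
    refine Finset.sum_congr rfl fun a _ => Finset.sum_congr rfl fun b _ => ?_
    by_cases hab : a = b
    · subst hab
      simp only [eq_self_iff_true, if_true, Matrix.diagonal_apply_eq]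
      by_cases hs : σ a < 0
      · rw [if_pos hs, max_eq_right (le_of_lt hs)]; ring
      · rw [if_neg hs, max_eq_left (not_lt.mp hs)]; ring
    · simp [Matrix.diagonal_apply_ne _ hab, hab]

open scoped Classical in
/-- let `B` be symmetric with spectral decomposition
`B = V·diag(σ)·Vᵀ` (`V` orthogonal), and let `B₊ = V·diag(max(σ,0))·Vᵀ`.
Then `B₊` is positive semidefinite, and for every positive semidefinite `X` one has
`‖B − X‖²_F ≥ Σ_{i : σ_i < 0} σ_i²`, with equality if and only if `X = B₊`.
In particular `B₊` is the unique nearest PSD matrix to `B` in the Frobenius norm and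
the minimal squared distance is `Σ_{i : σ_i < 0} σ_i²`. -/
theorem nearest_psd_of_symmetric {n : ℕ} (B V : Matrix (Fin n) (Fin n) ℝ)
    (σ : Fin n → ℝ) (hBsym : Bᵀ = B)
    (hV : Vᵀ * V = 1) (hVB : B = V * Matrix.diagonal σ * Vᵀ) :
    (V * Matrix.diagonal (fun i => max (σ i) 0) * Vᵀ).PosSemidef ∧
    (∀ X : Matrix (Fin n) (Fin n) ℝ, X.PosSemidef →
      (∑ i, if σ i < 0 then (σ i) ^ 2 else 0) ≤ frobSq (B - X)) ∧
    (∀ X : Matrix (Fin n) (Fin n) ℝ, X.PosSemidef →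
      (frobSq (B - X) = (∑ i, if σ i < 0 then (σ i) ^ 2 else 0) ↔
        X = V * Matrix.diagonal (fun i => max (σ i) 0) * Vᵀ)) := by
  have hV' : V * Vᵀ = 1 := mul_eq_one_comm.mp hV
  have h2 : ∀ A : Matrix (Fin n) (Fin n) ℝ, Vᵀ * (V * A) = A := fun A => by
    rw [← Matrix.mul_assoc, hV, Matrix.one_mul]
  have h2' : ∀ A : Matrix (Fin n) (Fin n) ℝ, V * (Vᵀ * A) = A := fun A => by
    rw [← Matrix.mul_assoc, hV', Matrix.one_mul]
  -- conjugation identity for the difference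
  have hBX : ∀ X : Matrix (Fin n) (Fin n) ℝ,
      B - X = V * (Matrix.diagonal σ - Vᵀ * X * V) * Vᵀ := by
    intro X
    rw [hVB]
    simp only [Matrix.mul_sub, Matrix.sub_mul, Matrix.mul_assoc, h2']
    rw [hV', Matrix.mul_one]
  -- transported PSD
  have hYpsd : ∀ X : Matrix (Fin n) (Fin n) ℝ, X.PosSemidef → (Vᵀ * X * V).PosSemidef := by
    intro X hX
    have := hX.mul_mul_conjTranspose_same Vᵀ
    simpa using this
  have hfrob : ∀ X : Matrix (Fin n) (Fin n) ℝ,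
      frobSq (B - X) = frobSq (Matrix.diagonal σ - Vᵀ * X * V) := by
    intro X
    rw [hBX X, frobSq_conj _ _ hV]
  refine ⟨?_, ?_, ?_⟩
  · have := (Matrix.PosSemidef.diagonal (R := ℝ)
      (fun i => le_max_right (σ i) 0)).mul_mul_conjTranspose_same V
    simpa using this
  · intro X hX
    rw [hfrob X]
    exact (core_nearest_psd σ _ (hYpsd X hX)).1
  · intro X hX
    rw [hfrob X]
    rw [(core_nearest_psd σ _ (hYpsd X hX)).2]
    have hrec : ∀ Z : Matrix (Fin n) (Fin n) ℝ, V * (Vᵀ * Z * V) * Vᵀ = Z := by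
      intro Z
      simp only [Matrix.mul_assoc, h2']
      rw [hV', Matrix.mul_one]
    constructor
    · intro h
      conv_lhs => rw [← hrec X, h]
    · intro h
      rw [h]
      simp only [Matrix.mul_assoc, h2]
      rw [hV, Matrix.mul_one]
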